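/- Let U be the harmonic-type function with boundary values (x0,x1,x2). Then for all n ≥ 0, B_n(U) = (3/5)ⁿ · ((x0−x1)² + (x1−x2)² + (x0−x2)²). -/
import Mathlib


open MeasureTheory Filter Set
open scoped ENNReal NNReal Classical

noncomputable section

namespace SG

/-- The three vertices `p₀ = (0,0)`, `p₁ = (1,0)`, `p₂ = (1/2, √3/2)` viewed in `ℂ`. -/
def p : Fin 3 → ℂ := ![0, 1, 1/2 + (Real.sqrt 3 / 2) * Complex.I]

/-- The three contraction maps `fᵢ x = (x + pᵢ)/2`. -/
def f (i : Fin 3) (x : ℂ) : ℂ := (x + p i) / 2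

/-- `K` is the Sierpinski gasket: the (unique) nonempty compact set with
`K = f₀(K) ∪ f₁(K) ∪ f₂(K)`. -/
def IsSG (K : Set ℂ) : Prop :=
  K.Nonempty ∧ IsCompact K ∧ K = f 0 '' K ∪ f 1 '' K ∪ f 2 '' K

/-- `α = log 3 / log 2`. -/
def alpha : ℝ := Real.log 3 / Real.log 2

/-- `β* = log 5 / log 2`. -/
def betastar : ℝ := Real.log 5 / Real.log 2

/-- The normalized `α`-dimensional Hausdorff measure restricted to `K`. -/
def nu (K : Set ℂ) : Measure ℂ :=
  ((Measure.hausdorffMeasure alpha : Measure ℂ) K)⁻¹ •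
    (Measure.hausdorffMeasure alpha : Measure ℂ).restrict K

/-- `f_w` for a finite word `w` over `{0,1,2}` (empty word gives the identity). -/
def fwl : List (Fin 3) → ℂ → ℂ
  | [] => id
  | i :: t => f i ∘ fwl t

/-- `f_w` for a word `w ∈ W_n = {0,1,2}ⁿ`. -/
def fw {n : ℕ} (w : Fin n → Fin 3) : ℂ → ℂ := fwl (List.ofFn w)

/-- The cell `K_w = f_w(K)`. -/
def Kw (K : Set ℂ) {n : ℕ} (w : Fin n → Fin 3) : Set ℂ := fw w '' K

/-- Adjacency `w⁽¹⁾ ∼ₙ w⁽²⁾`: distinct words with intersecting cells. -/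
def Adj (K : Set ℂ) {n : ℕ} (w1 w2 : Fin n → Fin 3) : Prop :=
  w1 ≠ w2 ∧ (Kw K w1 ∩ Kw K w2).Nonempty

/-- `Pₙu(w) = ∫_K u(f_w(x)) ν(dx)`. -/
def P (K : Set ℂ) {n : ℕ} (u : ℂ → ℝ) (w : Fin n → Fin 3) : ℝ :=
  ∫ x, u (fw w x) ∂(nu K)

/-- `Aₙ(u)`: sum over unordered adjacent pairs in `W_n` of `(Pₙu(w⁽¹⁾) − Pₙu(w⁽²⁾))²`
(written as half the sum over ordered pairs). -/
def A (K : Set ℂ) (n : ℕ) (u : ℂ → ℝ) : ℝ :=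
  (1/2) * ∑ w1 : Fin n → Fin 3, ∑ w2 : Fin n → Fin 3,
    if Adj K w1 w2 then (P K u w1 - P K u w2)^2 else 0

/-- The remaining index of `{0,1,2}` besides `i` and `j` (when `i ≠ j`):
since `0+1+2 = 0` in `Fin 3`, it is `-(i+j)`. -/
def other (i j : Fin 3) : Fin 3 := -(i + j)

/-- `U : K → ℝ` is harmonic-type with boundary values `(x0, x1, x2)`:
continuous on `K`, `U(pᵢ) = xᵢ`, and for every finite word `w` and distinct `i, j`
(with `k` the remaining index),
`U(f_w((pᵢ+pⱼ)/2)) = (2 U(f_w(pᵢ)) + 2 U(f_w(pⱼ)) + U(f_w(p_k)))/5`. -/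
def IsHarm (K : Set ℂ) (x0 x1 x2 : ℝ) (U : ℂ → ℝ) : Prop :=
  ContinuousOn U K ∧ U (p 0) = x0 ∧ U (p 1) = x1 ∧ U (p 2) = x2 ∧
  ∀ (w : List (Fin 3)) (i j : Fin 3), i ≠ j →
    U (fwl w ((p i + p j) / 2)) =
      (2 * U (fwl w (p i)) + 2 * U (fwl w (p j)) + U (fwl w (p (other i j)))) / 5

/-- `Bₙ(u) = Σ_{w ∈ Wₙ}` of the sum over the three unordered pairs of distinct
vertices of `V_w = {f_w(p₀), f_w(p₁), f_w(p₂)}` of squared differences. -/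
def B (n : ℕ) (u : ℂ → ℝ) : ℝ :=
  ∑ w : Fin n → Fin 3,
    ((u (fw w (p 0)) - u (fw w (p 1)))^2 + (u (fw w (p 1)) - u (fw w (p 2)))^2 +
      (u (fw w (p 0)) - u (fw w (p 2)))^2)

/-- weak harmonicity -/
def Harm' (U : ℂ → ℝ) : Prop :=
  ∀ (w : List (Fin 3)) (i j : Fin 3), i ≠ j →
    U (fwl w ((p i + p j) / 2)) =
      (2 * U (fwl w (p i)) + 2 * U (fwl w (p j)) + U (fwl w (p (other i j)))) / 5

lemma fw_cons {n : ℕ} (i : Fin 3) (w : Fin n → Fin 3) :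
    fw (Fin.cons i w) = f i ∘ fw w := by
  unfold fw
  rw [List.ofFn_succ]
  simp [fwl]

lemma harm'_comp {U : ℂ → ℝ} (h : Harm' U) (i : Fin 3) : Harm' (U ∘ f i) := by
  intro w j k hjk
  simpa [fwl] using h (i :: w) j k hjk

lemma B_succ (n : ℕ) (U : ℂ → ℝ) : B (n+1) U = ∑ i : Fin 3, B n (U ∘ f i) := by
  unfold B
  rw [← (Fin.consEquiv (fun _ : Fin (n+1) => Fin 3)).sum_comp]
  rw [Fintype.sum_prod_type]
  refine Finset.sum_congr rfl fun i _ => Finset.sum_congr rfl fun w _ => ?_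
  simp [Fin.consEquiv, fw_cons]

lemma hf (i j : Fin 3) : f i (p j) = (p i + p j)/2 := by unfold f; ring

lemma hfd (i : Fin 3) : f i (p i) = p i := by unfold f; ring

lemma key (U : ℂ → ℝ) (h : Harm' U) (n : ℕ) :
    B n U = (3/5)^n * ((U (p 0) - U (p 1))^2 + (U (p 1) - U (p 2))^2 +
      (U (p 0) - U (p 2))^2) := by
  induction n generalizing U with
  | zero => simp [B, fw, fwl]
  | succ n ih =>
    have hmid : ∀ i j : Fin 3, i ≠ j →
        U ((p i + p j)/2) = (2*U (p i) + 2*U (p j) + U (p (other i j)))/5 := by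
      intro i j hij
      simpa [fwl] using h [] i j hij
    have h01 := hmid 0 1 (by decide)
    have h02 := hmid 0 2 (by decide)
    have h12 := hmid 1 2 (by decide)
    have ho01 : other 0 1 = 2 := by decide
    have ho02 : other 0 2 = 1 := by decide
    have ho12 : other 1 2 = 0 := by decide
    rw [ho01] at h01; rw [ho02] at h02; rw [ho12] at h12
    rw [B_succ]
    rw [Fin.sum_univ_three]
    rw [ih _ (harm'_comp h 0), ih _ (harm'_comp h 1), ih _ (harm'_comp h 2)]
    simp only [Function.comp_apply, hf, hfd]
    rw [show (p 0 + p 0)/2 = p 0 by ring, show (p 1 + p 1)/2 = p 1 by ring,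
        show (p 2 + p 2)/2 = p 2 by ring,
        show (p 1 + p 0)/2 = (p 0 + p 1)/2 by ring,
        show (p 2 + p 0)/2 = (p 0 + p 2)/2 by ring,
        show (p 2 + p 1)/2 = (p 1 + p 2)/2 by ring,
        h01, h02, h12]
    ring

theorem statement6 (K : Set ℂ) (hK : IsSG K) (x0 x1 x2 : ℝ) (U : ℂ → ℝ)
    (hU : IsHarm K x0 x1 x2 U) (n : ℕ) :
    B n U = (3/5)^n * ((x0 - x1)^2 + (x1 - x2)^2 + (x0 - x2)^2) := by
  obtain ⟨-, h0, h1, h2, hh⟩ := hU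
  rw [key U hh n, h0, h1, h2]

end SG
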